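/- Let P be diagonal positive definite, Q satisfy Q + Qᵀ = diag(−1,0,…,0,1), A = diag(a₀,…,a_N) with all aᵢ > 0, G(t) diagonal with entries gᵢ(t) ≥ g_min > 0, and let μ, η, C > 0. Suppose u(t) ∈ ℝ^{N+1} solves A u_t = μ P⁻¹Q(A² u_x) − (1/C) A G(t) u + σ₀ P⁻¹ u_{x,0} e₀ + σ_L P⁻¹ ( u_{t,N} + η a_N² u_{x,N} + (1/C) g_N(t) u_N ) e_N, where u_x = P⁻¹Q u, σ₀ = μ a₀², and σ_L = −μ/η. Then d/dt ( uᵀ √A P √A u + (μ/η) u_N² ) = −2μ ‖A u_x‖²_P − 2 ‖√(G(t)A/C) u‖²_P − 2(μ/(η C)) g_N(t) u_N² ≤ 0. -/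

import Mathlib

set_option maxHeartbeats 1000000


open Matrix

/-- Semi-discrete energy estimate (Proposition 4) for the SBP-SAT
discretization of the cable-soma problem, with penalties `σ₀ = μ a₀²` and
`σ_L = −μ/η`. -/
theorem sbp_sat_cable_soma_energy
    (n : ℕ) (hn : 0 < n)
    (p : Fin (n + 1) → ℝ) (hp : ∀ i, 0 < p i)
    (P : Matrix (Fin (n + 1)) (Fin (n + 1)) ℝ) (hPdef : P = Matrix.diagonal p)
    (Q : Matrix (Fin (n + 1)) (Fin (n + 1)) ℝ)
    (hQ : Q + Qᵀ = Matrix.diagonal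
      (fun i => if i = 0 then (-1 : ℝ) else if i = Fin.last n then 1 else 0))
    (a : Fin (n + 1) → ℝ) (ha : ∀ i, 0 < a i)
    (g : ℝ → Fin (n + 1) → ℝ) (gmin : ℝ) (hgmin : 0 < gmin)
    (hg : ∀ t i, gmin ≤ g t i)
    (μ η C : ℝ) (hμ : 0 < μ) (hη : 0 < η) (hC : 0 < C)
    (u ut : ℝ → Fin (n + 1) → ℝ)
    (hut : ∀ t i, HasDerivAt (fun s => u s i) (ut t i) t)
    (hode : ∀ t,
      (Matrix.diagonal a).mulVec (ut t)
        = μ • (P⁻¹ * Q).mulVec (fun i => (a i) ^ 2 * ((P⁻¹ * Q).mulVec (u t)) i)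
          - (1 / C) • (fun i => a i * g t i * u t i)
          + (μ * (a 0) ^ 2 * ((P⁻¹ * Q).mulVec (u t)) 0) •
              P⁻¹.mulVec (Pi.single 0 1)
          + (-(μ / η) * (ut t (Fin.last n)
              + η * (a (Fin.last n)) ^ 2 * ((P⁻¹ * Q).mulVec (u t)) (Fin.last n)
              + (1 / C) * g t (Fin.last n) * u t (Fin.last n))) •
              P⁻¹.mulVec (Pi.single (Fin.last n) 1)) :
    ∀ t,
      HasDerivAt
        (fun s => (fun i => Real.sqrt (a i) * u s i) ⬝ᵥ
            P.mulVec (fun i => Real.sqrt (a i) * u s i)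
          + (μ / η) * (u s (Fin.last n)) ^ 2)
        (- 2 * μ * ((fun i => a i * ((P⁻¹ * Q).mulVec (u t)) i) ⬝ᵥ
            P.mulVec (fun i => a i * ((P⁻¹ * Q).mulVec (u t)) i))
          - 2 * ((fun i => Real.sqrt (g t i * a i / C) * u t i) ⬝ᵥ
            P.mulVec (fun i => Real.sqrt (g t i * a i / C) * u t i))
          - 2 * (μ / (η * C)) * g t (Fin.last n) * (u t (Fin.last n)) ^ 2) t ∧
      (- 2 * μ * ((fun i => a i * ((P⁻¹ * Q).mulVec (u t)) i) ⬝ᵥ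
            P.mulVec (fun i => a i * ((P⁻¹ * Q).mulVec (u t)) i))
          - 2 * ((fun i => Real.sqrt (g t i * a i / C) * u t i) ⬝ᵥ
            P.mulVec (fun i => Real.sqrt (g t i * a i / C) * u t i))
          - 2 * (μ / (η * C)) * g t (Fin.last n) * (u t (Fin.last n)) ^ 2) ≤ 0 := by
  intro t
  have hη' : η ≠ 0 := hη.ne'
  have hC' : C ≠ 0 := hC.ne'
  have hN0 : (0 : Fin (n + 1)) ≠ Fin.last n := by
    intro h
    have := congrArg Fin.val h
    simp [Fin.last] at this
    omega
  -- inverse facts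
  have hdet : IsUnit P.det := by
    rw [hPdef, Matrix.det_diagonal]
    exact (Finset.prod_ne_zero_iff.mpr fun i _ => (hp i).ne').isUnit
  have hPP : P * P⁻¹ = 1 := Matrix.mul_nonsing_inv P hdet
  have hPQ : ∀ x : Fin (n + 1) → ℝ, P.mulVec ((P⁻¹ * Q).mulVec x) = Q.mulVec x := by
    intro x
    rw [Matrix.mulVec_mulVec, ← Matrix.mul_assoc, hPP, Matrix.one_mul]
  have hPid : ∀ x : Fin (n + 1) → ℝ, P.mulVec (P⁻¹.mulVec x) = x := by
    intro x
    rw [Matrix.mulVec_mulVec, hPP, Matrix.one_mulVec]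
  have hdot : ∀ x y : Fin (n + 1) → ℝ, x ⬝ᵥ P.mulVec y = ∑ i, x i * (p i * y i) := by
    intro x y
    simp [hPdef, Matrix.mulVec_diagonal, dotProduct]
  set V := (P⁻¹ * Q).mulVec (u t) with hV
  have hQu : Q.mulVec (u t) = fun i => p i * V i := by
    have h1 : P.mulVec V = Q.mulVec (u t) := by rw [hV]; exact hPQ (u t)
    rw [← h1]
    funext i
    simp [hPdef, Matrix.mulVec_diagonal]
  -- main identity from the ODE
  have hmain := congrArg (fun x => u t ⬝ᵥ P.mulVec x) (hode t)
  simp only [Matrix.mulVec_add, Matrix.mulVec_sub, Matrix.mulVec_smul, hPQ, hPid,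
    dotProduct_add, dotProduct_sub, dotProduct_smul, smul_eq_mul, dotProduct_single,
    mul_one, ← hV] at hmain
  -- SBP identity
  have hsbp : u t ⬝ᵥ Q.mulVec (fun i => a i ^ 2 * V i)
      = (-(u t 0 * (a 0 ^ 2 * V 0))
          + u t (Fin.last n) * (a (Fin.last n) ^ 2 * V (Fin.last n)))
        - ∑ i, p i * V i * (a i ^ 2 * V i) := by
    have h1 : u t ⬝ᵥ (Q + Qᵀ).mulVec (fun i => a i ^ 2 * V i)
        = -(u t 0 * (a 0 ^ 2 * V 0))
          + u t (Fin.last n) * (a (Fin.last n) ^ 2 * V (Fin.last n)) := by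
      rw [hQ]
      simp only [Matrix.mulVec_diagonal, dotProduct]
      have hterm : ∀ i : Fin (n + 1),
          u t i * ((if i = 0 then (-1 : ℝ) else if i = Fin.last n then 1 else 0)
            * (a i ^ 2 * V i))
          = (if i = 0 then -(u t i * (a i ^ 2 * V i)) else 0)
            + (if i = Fin.last n then u t i * (a i ^ 2 * V i) else 0) := by
        intro i
        by_cases h0 : i = 0
        · subst h0
          simp [hN0]
        · by_cases hL : i = Fin.last n
          · subst hL
            simp [h0]
          · simp [h0, hL]
      rw [Finset.sum_congr rfl fun i _ => hterm i, Finset.sum_add_distrib,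
        Finset.sum_ite_eq' Finset.univ, Finset.sum_ite_eq' Finset.univ]
      simp
    have h2 : u t ⬝ᵥ Qᵀ.mulVec (fun i => a i ^ 2 * V i)
        = ∑ i, p i * V i * (a i ^ 2 * V i) := by
      rw [Matrix.dotProduct_mulVec, Matrix.vecMul_transpose, hQu]
      simp [dotProduct]
    have h3 : u t ⬝ᵥ (Q + Qᵀ).mulVec (fun i => a i ^ 2 * V i)
        = u t ⬝ᵥ Q.mulVec (fun i => a i ^ 2 * V i)
          + u t ⬝ᵥ Qᵀ.mulVec (fun i => a i ^ 2 * V i) := by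
      rw [Matrix.add_mulVec, dotProduct_add]
    linarith [h1, h2, h3]
  have hL : u t ⬝ᵥ P.mulVec ((Matrix.diagonal a).mulVec (ut t))
      = ∑ i, u t i * (p i * (a i * ut t i)) := by
    rw [hdot]
    simp [Matrix.mulVec_diagonal]
  have hGterm : u t ⬝ᵥ P.mulVec (fun i => a i * g t i * u t i)
      = ∑ i, u t i * (p i * (a i * g t i * u t i)) := hdot _ _
  rw [hL, hGterm, hsbp] at hmain
  have hclean : ∑ i, u t i * (p i * (a i * ut t i))
      = -(μ * ∑ i, p i * V i * (a i ^ 2 * V i))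
        - (1 / C) * ∑ i, u t i * (p i * (a i * g t i * u t i))
        - (μ / η) * ut t (Fin.last n) * u t (Fin.last n)
        - (μ / (η * C)) * g t (Fin.last n) * u t (Fin.last n) ^ 2 := by
    rw [hmain]
    field_simp
    ring
  -- derivative of the energy
  have hEq : ∀ s, (fun i => Real.sqrt (a i) * u s i) ⬝ᵥ
        P.mulVec (fun i => Real.sqrt (a i) * u s i)
        + (μ / η) * (u s (Fin.last n)) ^ 2
      = (∑ i, p i * a i * u s i ^ 2) + μ / η * u s (Fin.last n) ^ 2 := by
    intro s
    simp only [hdot]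
    congr 1
    refine Finset.sum_congr rfl fun i _ => ?_
    have hs := Real.mul_self_sqrt (ha i).le
    linear_combination (p i * u s i ^ 2) * hs
  have hG : HasDerivAt
      (fun s => (∑ i, p i * a i * u s i ^ 2) + μ / η * u s (Fin.last n) ^ 2)
      ((∑ i, p i * a i * (2 * u t i * ut t i))
        + μ / η * (2 * u t (Fin.last n) * ut t (Fin.last n))) t := by
    apply HasDerivAt.add
    · apply HasDerivAt.fun_sum
      intro i _
      have h := ((hut t i).fun_pow 2).const_mul (p i * a i)
      convert h using 1
      · rfl
      push_cast
      ring
    · have h := ((hut t (Fin.last n)).fun_pow 2).const_mul (μ / η)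
      convert h using 1
      · rfl
      push_cast
      ring
  have hder := hG.congr_of_eventuallyEq (Filter.Eventually.of_forall hEq)
  -- rewrite the target derivative value
  have hT1 : (fun i => a i * V i) ⬝ᵥ P.mulVec (fun i => a i * V i)
      = ∑ i, p i * V i * (a i ^ 2 * V i) := by
    simp only [hdot]
    exact Finset.sum_congr rfl fun i _ => by ring
  have hT2 : (fun i => Real.sqrt (g t i * a i / C) * u t i) ⬝ᵥ
        P.mulVec (fun i => Real.sqrt (g t i * a i / C) * u t i)
      = (1 / C) * ∑ i, u t i * (p i * (a i * g t i * u t i)) := by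
    simp only [hdot]
    rw [Finset.mul_sum]
    refine Finset.sum_congr rfl fun i _ => ?_
    have hx : (0 : ℝ) ≤ g t i * a i / C :=
      div_nonneg (mul_nonneg (hgmin.le.trans (hg t i)) (ha i).le) hC.le
    have hs := Real.mul_self_sqrt hx
    linear_combination (p i * u t i ^ 2) * hs
  have hTD : (- 2 * μ * ((fun i => a i * V i) ⬝ᵥ P.mulVec (fun i => a i * V i))
      - 2 * ((fun i => Real.sqrt (g t i * a i / C) * u t i) ⬝ᵥ
          P.mulVec (fun i => Real.sqrt (g t i * a i / C) * u t i))
      - 2 * (μ / (η * C)) * g t (Fin.last n) * (u t (Fin.last n)) ^ 2)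
      = (∑ i, p i * a i * (2 * u t i * ut t i))
        + μ / η * (2 * u t (Fin.last n) * ut t (Fin.last n)) := by
    rw [hT1, hT2]
    have hD2 : ∑ i, p i * a i * (2 * u t i * ut t i)
        = 2 * ∑ i, u t i * (p i * (a i * ut t i)) := by
      rw [Finset.mul_sum]
      exact Finset.sum_congr rfl fun i _ => by ring
    rw [hD2]
    linear_combination (-2 : ℝ) * hclean
  constructor
  · rw [← hTD] at hder
    exact hder
  · have hS1 : 0 ≤ (fun i => a i * V i) ⬝ᵥ P.mulVec (fun i => a i * V i) := by
      simp only [hdot]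
      refine Finset.sum_nonneg fun i _ => ?_
      nlinarith [(hp i).le, sq_nonneg (a i * V i)]
    have hS2 : 0 ≤ (fun i => Real.sqrt (g t i * a i / C) * u t i) ⬝ᵥ
        P.mulVec (fun i => Real.sqrt (g t i * a i / C) * u t i) := by
      simp only [hdot]
      refine Finset.sum_nonneg fun i _ => ?_
      nlinarith [(hp i).le, sq_nonneg (Real.sqrt (g t i * a i / C) * u t i)]
    have hS3 : 0 ≤ 2 * (μ / (η * C)) * g t (Fin.last n) * (u t (Fin.last n)) ^ 2 := by
      have hgN : (0 : ℝ) ≤ g t (Fin.last n) := hgmin.le.trans (hg t _)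
      positivity
    nlinarith [hS1, hS2, hS3, hμ]
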